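/- Let M be an integer matrix with L columns and suppose there is a subset I ⊆ {1, ..., L} such that for every integer vector α ∈ ℤ^L with Mα = 0, one has α_i = 0 for all i ∈ I. Let A be a torsion-free abelian group and suppose a ∈ A^L satisfies Ma = 0 (interpreting the matrix action by integer multiples and sums in A). Then a_i = 0 for all i ∈ I. -/

import Mathlib

/-- Clearing denominators of a rational number. -/
lemma clear_denom (q : ℚ) (d : ℤ) (h : (q.den : ℤ) ∣ d) :
    ∃ z : ℤ, (z : ℚ) = d * q := by
  refine ⟨d / q.den * q.num, ?_⟩
  push_cast [Int.cast_div_charZero h]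
  rw [div_mul_eq_mul_div, mul_div_assoc, Rat.num_div_den]

/-- Clearing denominators of a finite family of rationals. -/
lemma clear_denoms {n : ℕ} (c : Fin n → ℚ) :
    ∃ (d : ℤ) (c' : Fin n → ℤ), 0 < d ∧ ∀ j, (c' j : ℚ) = d * c j := by
  set d : ℤ := ∏ j, ((c j).den : ℤ) with hd
  have hdvd : ∀ j, ((c j).den : ℤ) ∣ d := fun j =>
    Finset.dvd_prod_of_mem _ (Finset.mem_univ j)
  choose c' hc' using fun j => clear_denom (c j) d (hdvd j)
  refine ⟨d, c', ?_, hc'⟩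
  exact Finset.prod_pos fun j _ => Int.natCast_pos.mpr (c j).den_pos

/-- If every integer solution `α` of `Mα = 0` has `α_i = 0` for `i ∈ I`, then the same
holds for solutions with entries in any torsion-free abelian group `A`. -/
theorem torsion_free_abelian_solutions
    (J L : ℕ) (M : Matrix (Fin J) (Fin L) ℤ) (I : Set (Fin L))
    (hInt : ∀ α : Fin L → ℤ, (∀ j : Fin J, ∑ i : Fin L, M j i * α i = 0) →
      ∀ i ∈ I, α i = 0)
    (A : Type) [AddCommGroup A]
    (htf : ∀ (m : ℤ) (x : A), m ≠ 0 → m • x = 0 → x = 0)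
    (a : Fin L → A) (ha : ∀ j : Fin J, ∑ i : Fin L, M j i • a i = 0) :
    ∀ i ∈ I, a i = 0 := by
  intro i hi
  -- the rows of M as linear functionals over ℚ
  set Lf : Fin J → ((Fin L → ℚ) →ₗ[ℚ] ℚ) := fun j =>
    ∑ k, (M j k : ℚ) • LinearMap.proj k with hLf
  have hLfapp : ∀ j α, Lf j α = ∑ k, (M j k : ℚ) * α k := by
    intro j α; simp [hLf]
  -- rational kernel vanishes at i
  have hker : (⨅ j, LinearMap.ker (Lf j)) ≤ LinearMap.ker (LinearMap.proj i (R := ℚ)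
      (φ := fun _ : Fin L => ℚ)) := by
    intro α hα
    simp only [Submodule.mem_iInf, LinearMap.mem_ker, hLfapp] at hα
    obtain ⟨D, β, hD, hβ⟩ := clear_denoms α
    have hβker : ∀ j : Fin J, ∑ k : Fin L, M j k * β k = 0 := by
      intro j
      have : ((∑ k : Fin L, M j k * β k : ℤ) : ℚ) = 0 := by
        push_cast
        calc ∑ k : Fin L, (M j k : ℚ) * (β k : ℚ)
            = (D : ℚ) * ∑ k, (M j k : ℚ) * α k := by
              rw [Finset.mul_sum]; congr 1; ext k; rw [hβ k]; ring
          _ = 0 := by rw [hα j, mul_zero]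
      exact_mod_cast this
    have hbi : β i = 0 := hInt β hβker i hi
    have : (D : ℚ) * α i = 0 := by rw [← hβ i, hbi, Int.cast_zero]
    have hαi : α i = 0 := by
      rcases mul_eq_zero.mp this with h | h
      · exact absurd (by exact_mod_cast h) hD.ne'
      · exact h
    simpa [LinearMap.mem_ker] using hαi
  -- hence proj i is in the span of the rows
  obtain ⟨c, hc⟩ := (Submodule.mem_span_range_iff_exists_fun ℚ).1 (mem_span_of_iInf_ker_le_ker hker)
  -- clear denominators of c
  obtain ⟨d, c', hd, hc'⟩ := clear_denoms c
  -- integer identity: ∀ k, ∑ j, c' j * M j k = if k = i then d else 0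
  have key : ∀ k : Fin L, ∑ j : Fin J, c' j * M j k = if k = i then d else 0 := by
    intro k
    have h1 : ∑ j, c j * (M j k : ℚ) = if k = i then 1 else 0 := by
      simpa [hLfapp, Pi.single_apply, mul_comm, eq_comm] using
        congrArg (fun f : (Fin L → ℚ) →ₗ[ℚ] ℚ => f (Pi.single k 1)) hc
    have h2 : ((∑ j : Fin J, c' j * M j k : ℤ) : ℚ) = ((if k = i then d else 0 : ℤ) : ℚ) := by
      push_cast [apply_ite (Int.cast : ℤ → ℚ)]
      calc ∑ j : Fin J, (c' j : ℚ) * (M j k : ℚ)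
          = (d : ℚ) * ∑ j, c j * (M j k : ℚ) := by
            rw [Finset.mul_sum]; congr 1; ext j; rw [hc' j]; ring
        _ = (if k = i then (d:ℚ) else 0) := by
            rw [h1]; split <;> ring
    exact_mod_cast h2
  -- transfer to A
  have hda : d • a i = 0 := by
    have : d • a i = ∑ k : Fin L, (∑ j : Fin J, c' j * M j k) • a k := by
      rw [Finset.sum_congr rfl fun k _ => by rw [key k]]
      simp [Finset.sum_ite_eq', Pi.single_apply]
    rw [this]
    simp only [Finset.sum_smul]
    rw [Finset.sum_comm]
    simp only [mul_smul, ← Finset.smul_sum]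
    simp [ha]
  exact htf d (a i) hd.ne' hda
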